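/- Let α be a nonzero irrational algebraic number over ℚ. The minimal polynomial of α over ℚ is reciprocal (i.e., its coefficient sequence is palindromic) if and only if ℚ(α) ≠ ℚ(α + α⁻¹). -/

import Mathlib

open Polynomial IntermediateField

set_option synthInstance.maxHeartbeats 800000
set_option maxHeartbeats 1000000

/-- A polynomial `p` of degree `n` is reciprocal if its coefficient sequence is
palindromic: `c i = c (n - i)` for all `i ≤ n`. -/
def IsReciprocal {R : Type*} [Semiring R] (p : Polynomial R) : Prop :=
  ∀ i ≤ p.natDegree, p.coeff i = p.coeff (p.natDegree - i)

theorem dicksonAux : ∀ n : ℕ, (dickson 1 (1:ℚ) n).natDegree ≤ n ∧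
    (0 < n → (dickson 1 (1:ℚ) n).coeff n = 1)
  | 0 => by
    constructor
    · have : dickson 1 (1:ℚ) 0 = 2 := by rw [dickson_zero]; norm_num
      rw [this]
      simp
    · omega
  | 1 => by simp [dickson_one]
  | n + 2 => by
    have ih1 := dicksonAux (n + 1)
    have ih0 := dicksonAux n
    rw [dickson_add_two]
    constructor
    · refine (natDegree_sub_le _ _).trans (max_le ?_ ?_)
      · refine (natDegree_mul_le).trans ?_
        have := Nat.add_le_add (natDegree_X_le (R:=ℚ)) ih1.1
        omega
      · refine (natDegree_mul_le).trans ?_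
        have := ih0.1
        simp only [natDegree_C]
        omega
    · intro _
      rw [coeff_sub, coeff_X_mul, ih1.2 (Nat.succ_pos n),
        coeff_eq_zero_of_natDegree_lt, sub_zero]
      refine lt_of_le_of_lt (natDegree_mul_le.trans ?_) (?_ : n + 1 < n + 2)
      · have := ih0.1
        simp only [natDegree_C]
        omega
      · omega

private lemma auxA (α : ℂ) (hα0 : α ≠ 0) (p : ℚ[X]) (hroot : aeval α p = 0)
    (hrec : ∀ i ≤ p.natDegree, p.coeff i = p.coeff (p.natDegree - i)) :
    aeval α⁻¹ p = 0 := by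
  have hrev : p.reverse = p := by
    ext i
    rw [coeff_reverse]
    rcases le_or_gt i p.natDegree with h | h
    · rw [revAt_le h, ← hrec i h]
    · rw [← revAtFun_eq, revAtFun, if_neg (not_le.mpr h)]
  letI := invertibleOfNonzero hα0
  have := eval₂_reverse_eq_zero_iff (algebraMap ℚ ℂ) α p
  rw [hrev, invOf_eq_inv] at this
  rw [aeval_def]
  exact this.mpr (by rwa [aeval_def] at hroot)

private lemma auxB (α : ℂ) (hα0 : α ≠ 0) (hint : IsIntegral ℚ α)
    (hdeg : 2 ≤ (minpoly ℚ α).natDegree) (hroot : aeval α⁻¹ (minpoly ℚ α) = 0) :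
    ∀ i ≤ (minpoly ℚ α).natDegree,
      (minpoly ℚ α).coeff i = (minpoly ℚ α).coeff ((minpoly ℚ α).natDegree - i) := by
  set p := minpoly ℚ α with hp
  have hpne : p ≠ 0 := minpoly.ne_zero hint
  have hmonic : p.Monic := minpoly.monic hint
  have hc0 : p.coeff 0 ≠ 0 := minpoly.coeff_zero_ne_zero hint hα0
  -- α is a root of reverse p
  have hrevroot : aeval α p.reverse = 0 := by
    letI := invertibleOfNonzero (inv_ne_zero hα0)
    have := eval₂_reverse_eq_zero_iff (algebraMap ℚ ℂ) α⁻¹ p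
    rw [invOf_eq_inv, inv_inv] at this
    rw [aeval_def]
    exact this.mpr (by rwa [aeval_def] at hroot)
  have hdvd : p ∣ p.reverse := minpoly.dvd ℚ α hrevroot
  have hndrev : p.reverse.natDegree = p.natDegree := by
    rw [reverse_natDegree, natTrailingDegree_eq_zero.mpr (Or.inr hc0), Nat.sub_zero]
  have hlrev : p.reverse.leadingCoeff = p.coeff 0 := by
    rw [leadingCoeff, hndrev, coeff_reverse, revAt_le le_rfl, Nat.sub_self]
  -- reverse p = C (p.coeff 0) * p
  have key : p.reverse = C (p.coeff 0) * p := by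
    have h2 : (C (p.coeff 0) * p) ∣ p.reverse := by
      obtain ⟨u, hu⟩ := hdvd
      have hu0 : u ≠ 0 := fun h => hpne (reverse_eq_zero.mp (by rw [hu, h, mul_zero]))
      have hdu : u.natDegree = 0 := by
        have := natDegree_mul hpne hu0 ▸ hu ▸ hndrev
        omega
      obtain ⟨a, rfl⟩ : ∃ a, u = C a := ⟨u.coeff 0, eq_C_of_natDegree_eq_zero hdu⟩
      have ha : a = p.coeff 0 := by
        have := hlrev
        rw [hu, leadingCoeff_mul, leadingCoeff_C, hmonic.leadingCoeff, one_mul] at this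
        exact this
      exact ⟨1, by rw [hu, ha, mul_one, mul_comm]⟩
    refine (eq_of_dvd_of_natDegree_le_of_leadingCoeff h2 ?_ ?_).symm
    · rw [hndrev, natDegree_C_mul hc0]
    · rw [leadingCoeff_mul, leadingCoeff_C, hmonic.leadingCoeff, mul_one, hlrev]
  -- the constant is ±1
  have hcoeffrel : ∀ i ≤ p.natDegree, p.coeff (p.natDegree - i) = p.coeff 0 * p.coeff i := by
    intro i hi
    rw [← revAt_le hi, ← coeff_reverse, key, coeff_C_mul]
  have hsq : p.coeff 0 * p.coeff 0 = 1 := by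
    have h1 : p.reverse.coeff 0 = 1 := by
      rw [coeff_zero_reverse, hmonic.leadingCoeff]
    rw [key, coeff_C_mul] at h1
    exact h1
  rcases mul_self_eq_one_iff.mp hsq with h1 | h1
  · intro i hi
    rw [hcoeffrel i hi, h1, one_mul]
  · -- p.coeff 0 = -1 : contradiction via p.eval 1 = 0
    exfalso
    have heval : p.eval 1 = 0 := by
      have hs : p.eval 1 = ∑ i ∈ Finset.range (p.natDegree + 1), p.coeff i := by
        rw [eval_eq_sum_range]; simp
      have hs2 : ∑ i ∈ Finset.range (p.natDegree + 1), p.coeff i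
          = -∑ i ∈ Finset.range (p.natDegree + 1), p.coeff i := by
        nth_rewrite 1 [← Finset.sum_range_reflect]
        rw [← Finset.sum_neg_distrib]
        refine Finset.sum_congr rfl fun i hi => ?_
        rw [Finset.mem_range] at hi
        rw [Nat.add_sub_cancel, hcoeffrel i (by omega), h1, neg_one_mul]
      rw [hs]; linarith
    have := natDegree_eq_of_degree_eq_some
      (Polynomial.degree_eq_one_of_irreducible_of_root (minpoly.irreducible hint) heval)
    norm_num at this
    rw [← hp] at this
    omega

private lemma auxC (α : ℂ) (hα0 : α ≠ 0) (halg : IsAlgebraic ℚ α)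
    (hdeg : 2 ≤ (minpoly ℚ α).natDegree)
    (hrec : ∀ i ≤ (minpoly ℚ α).natDegree,
      (minpoly ℚ α).coeff i = (minpoly ℚ α).coeff ((minpoly ℚ α).natDegree - i)) :
    ℚ⟮α⟯ ≠ ℚ⟮α + α⁻¹⟯ := by
  have hint : IsIntegral ℚ α := halg.isIntegral
  set p := minpoly ℚ α with hp
  set n := p.natDegree with hn
  have hpne : p ≠ 0 := minpoly.ne_zero hint
  -- n is even
  have hnodd : ¬ Odd n := by
    intro hodd
    have heval : p.eval (-1) = 0 := by
      set f : ℕ → ℚ := fun i => p.coeff i * (-1) ^ i with hfq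
      have hs : p.eval (-1) = ∑ i ∈ Finset.range (n + 1), f i := by
        rw [eval_eq_sum_range]
      have hrefl : ∑ i ∈ Finset.range (n + 1), f (n - i)
          = ∑ i ∈ Finset.range (n + 1), f i := by
        have := Finset.sum_range_reflect f (n + 1)
        simpa using this
      have hkey : ∀ i ∈ Finset.range (n + 1), f (n - i) = -(f i) := by
        intro i hi
        rw [Finset.mem_range] at hi
        have hin : i ≤ n := by omega
        have h2 : (-1:ℚ) ^ (n - i) = -(-1) ^ i := by
          rcases Nat.even_or_odd i with he | ho
          · have h3 : Odd (n - i) := Nat.odd_iff.mpr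
              (by have := Nat.even_iff.mp he; have := Nat.odd_iff.mp hodd; omega)
            rw [he.neg_one_pow, h3.neg_one_pow]
          · have h3 : Even (n - i) := Nat.even_iff.mpr
              (by have := Nat.odd_iff.mp ho; have := Nat.odd_iff.mp hodd; omega)
            rw [ho.neg_one_pow, h3.neg_one_pow]
            norm_num
        rw [hfq]
        simp only []
        rw [← hrec i hin, h2]
        ring
      rw [Finset.sum_congr rfl hkey, Finset.sum_neg_distrib] at hrefl
      rw [hs]
      linarith [hrefl]
    have := natDegree_eq_of_degree_eq_some
      (Polynomial.degree_eq_one_of_irreducible_of_root (minpoly.irreducible hint) heval)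
    norm_num at this
    rw [← hp, ← hn] at this
    omega
  obtain ⟨m, hm'⟩ := Nat.not_odd_iff_even.mp hnodd
  have hm : n = 2 * m := by omega
  have hm1 : 1 ≤ m := by omega
  set β := α + α⁻¹ with hβ
  -- the polynomial g
  set g : ℚ[X] := (∑ j ∈ Finset.range (m + 1), C (p.coeff (m + j)) * dickson 1 1 j)
      - C (p.coeff m) with hg
  -- g is nonzero with natDegree ≤ m
  have hgcoeff : g.coeff m = 1 := by
    rw [hg, coeff_sub, coeff_C, if_neg (by omega), sub_zero, finset_sum_coeff]
    rw [Finset.sum_eq_single m]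
    · rw [coeff_C_mul, (dicksonAux m).2 (by omega)]
      have h5 : p.coeff (m + m) = 1 := by
        have h6 : m + m = n := by omega
        rw [h6]
        exact (minpoly.monic hint).coeff_natDegree
      rw [h5, mul_one]
    · intro j hj hjm
      rw [Finset.mem_range] at hj
      rw [coeff_C_mul,
        coeff_eq_zero_of_natDegree_lt (lt_of_le_of_lt (dicksonAux j).1 (by omega)), mul_zero]
    · intro h
      exact absurd (Finset.self_mem_range_succ m) h
  have hgne : g ≠ 0 := fun h => by simp [h] at hgcoeff
  have hgdeg : g.natDegree ≤ m := by
    rw [hg]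
    refine (natDegree_sub_le _ _).trans (max_le ?_ (by simp))
    refine (natDegree_sum_le _ _).trans ?_
    rw [Finset.fold_max_le]
    refine ⟨by omega, fun j hj => ?_⟩
    rw [Finset.mem_range] at hj
    exact natDegree_mul_le.trans (by simpa using (dicksonAux j).1.trans (by omega))
  -- β is a root of g
  have hgroot : aeval β g = 0 := by
    have hdick : ∀ j : ℕ, aeval β (dickson 1 (1:ℚ) j) = α ^ j + α⁻¹ ^ j := by
      intro j
      rw [aeval_def, eval₂_eq_eval_map, map_dickson]
      have : ((algebraMap ℚ ℂ) 1 : ℂ) = 1 := map_one _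
      rw [this]
      exact dickson_one_one_eval_add_inv α α⁻¹ (mul_inv_cancel₀ hα0) j
    have expand : aeval β g = (∑ j ∈ Finset.range (m + 1),
        (algebraMap ℚ ℂ) (p.coeff (m + j)) * (α ^ j + α⁻¹ ^ j))
        - (algebraMap ℚ ℂ) (p.coeff m) := by
      rw [hg, map_sub, map_sum, aeval_C]
      congr 1
      refine Finset.sum_congr rfl fun j _ => ?_
      rw [map_mul, aeval_C, hdick j]
    rw [expand]
    -- multiply by α ^ m
    have hαm : (α : ℂ) ^ m ≠ 0 := pow_ne_zero _ hα0
    rw [sub_eq_zero]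
    apply mul_right_cancel₀ hαm
    set f : ℕ → ℂ := fun i => (algebraMap ℚ ℂ) (p.coeff i) * α ^ i with hf
    have split : ∀ j ∈ Finset.range (m+1),
        (algebraMap ℚ ℂ) (p.coeff (m + j)) * (α ^ j + α⁻¹ ^ j) * α ^ m
        = f (m + j) + f (m - j) := by
      intro j hj
      rw [Finset.mem_range] at hj
      have hcoeq : p.coeff (m + j) = p.coeff (m - j) := by
        have h4 : n - (m + j) = m - j := by omega
        rw [hrec (m+j) (by omega), h4]
      have h3 : α⁻¹ ^ j * α ^ m = α ^ (m - j) := by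
        rw [inv_pow, inv_mul_eq_iff_eq_mul₀ (pow_ne_zero j hα0), ← pow_add]
        congr 1
        omega
      rw [show f (m + j) = (algebraMap ℚ ℂ) (p.coeff (m + j)) * α ^ (m + j) from rfl,
        show f (m - j) = (algebraMap ℚ ℂ) (p.coeff (m - j)) * α ^ (m - j) from rfl,
        ← hcoeq, ← h3, pow_add]
      ring
    rw [Finset.sum_mul, Finset.sum_congr rfl split, Finset.sum_add_distrib]
    have hrefl : ∑ j ∈ Finset.range (m+1), f (m - j) = ∑ j ∈ Finset.range (m+1), f j := by
      have := Finset.sum_range_reflect f (m+1)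
      simpa using this
    have hrootsum : ∑ i ∈ Finset.range (n + 1), f i = 0 := by
      have := minpoly.aeval ℚ α
      rw [← hp, aeval_eq_sum_range] at this
      exact this
    have hsplit2 : ∑ i ∈ Finset.range (n + 1), f i
        = ∑ i ∈ Finset.range m, f i + ∑ j ∈ Finset.range (m+1), f (m + j) := by
      have h1 : n + 1 = m + (m + 1) := by omega
      rw [h1, Finset.sum_range_add]
    have hsum3 : ∑ j ∈ Finset.range (m+1), f j = ∑ i ∈ Finset.range m, f i + f m := by
      rw [Finset.sum_range_succ]
    rw [hrefl, hsum3]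
    have : ∑ j ∈ Finset.range (m+1), f (m + j) = - ∑ i ∈ Finset.range m, f i := by
      rw [hsplit2] at hrootsum; linear_combination hrootsum
    rw [this]
    have hfm : f m = (algebraMap ℚ ℂ) (p.coeff m) * α ^ m := rfl
    rw [← hfm]
    ring
  -- conclude
  intro heq
  have hβint : IsIntegral ℚ β := hint.add (halg.inv.isIntegral)
  have hβdeg : (minpoly ℚ β).natDegree ≤ m :=
    (natDegree_le_of_dvd (minpoly.dvd ℚ β hgroot) hgne).trans hgdeg
  have h1 : Module.finrank ℚ ℚ⟮α⟯ = n := adjoin.finrank hint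
  have h2 : Module.finrank ℚ ℚ⟮β⟯ = (minpoly ℚ β).natDegree := adjoin.finrank hβint
  rw [heq] at h1
  omega

private lemma auxD (α : ℂ) (hα0 : α ≠ 0) (halg : IsAlgebraic ℚ α)
    (hne : ℚ⟮α⟯ ≠ ℚ⟮α + α⁻¹⟯) :
    aeval α⁻¹ (minpoly ℚ α) = 0 := by
  have hint := halg.isIntegral
  set β := α + α⁻¹ with hβ
  have hβmem : β ∈ ℚ⟮α⟯ := add_mem (mem_adjoin_simple_self ℚ α)
    (inv_mem (mem_adjoin_simple_self ℚ α))
  have hle : ℚ⟮β⟯ ≤ ℚ⟮α⟯ := adjoin_simple_le_iff.mpr hβmem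
  have hαnot : α ∉ ℚ⟮β⟯ := by
    intro hmem
    exact hne (le_antisymm (adjoin_simple_le_iff.mpr hmem) hle)
  set K := ℚ⟮β⟯ with hK
  have hKint : IsIntegral K α := hint.tower_top
  set q : K[X] := X ^ 2 - C (AdjoinSimple.gen ℚ β) * X + 1 with hq
  have hqmonic : q.Monic := by
    rw [hq]
    monicity!
  have hqdeg : q.natDegree = 2 := by
    rw [hq]
    compute_degree!
  have hgenmap : algebraMap K ℂ (AdjoinSimple.gen ℚ β) = β := AdjoinSimple.algebraMap_gen ℚ β
  have hqroot : aeval α q = 0 := by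
    rw [hq]
    simp only [map_add, map_sub, map_pow, map_mul, aeval_X, aeval_C, map_one, hgenmap, hβ]
    field_simp
    ring
  have hqinv : aeval α⁻¹ q = 0 := by
    rw [hq]
    simp only [map_add, map_sub, map_pow, map_mul, aeval_X, aeval_C, map_one, hgenmap, hβ]
    field_simp
    ring
  have hmindvd : minpoly K α ∣ q := minpoly.dvd K α hqroot
  have hd2 : (minpoly K α).natDegree = 2 := by
    have hle2 : (minpoly K α).natDegree ≤ 2 :=
      hqdeg ▸ natDegree_le_of_dvd hmindvd hqmonic.ne_zero
    have hne1 : (minpoly K α).natDegree ≠ 1 := by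
      intro h
      obtain ⟨y, hy⟩ := minpoly.natDegree_eq_one_iff.mp h
      exact hαnot (hy ▸ y.2)
    have := minpoly.natDegree_pos hKint
    omega
  have hqeq : minpoly K α = q :=
    eq_of_dvd_of_natDegree_le_of_leadingCoeff hmindvd (by omega)
      (by rw [(minpoly.monic hKint).leadingCoeff, hqmonic.leadingCoeff])
  have hinvroot : aeval α⁻¹ (minpoly K α) = 0 := by rw [hqeq]; exact hqinv
  have hdvd2 : minpoly K α ∣ (minpoly ℚ α).map (algebraMap ℚ K) :=
    minpoly.dvd_map_of_isScalarTower ℚ K α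
  obtain ⟨r, hr⟩ := hdvd2
  have : aeval α⁻¹ ((minpoly ℚ α).map (algebraMap ℚ K)) = 0 := by
    rw [hr, map_mul, hinvroot, zero_mul]
  rwa [aeval_map_algebraMap] at this


theorem stmt0 (α : ℂ) (hα0 : α ≠ 0) (halg : IsAlgebraic ℚ α)
    (hirr : α ∉ Set.range ((↑) : ℚ → ℂ)) :
    IsReciprocal (minpoly ℚ α) ↔ ℚ⟮α⟯ ≠ ℚ⟮α + α⁻¹⟯ := by
  have hint : IsIntegral ℚ α := halg.isIntegral
  have hdeg : 2 ≤ (minpoly ℚ α).natDegree := by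
    rw [minpoly.two_le_natDegree_iff hint]
    rintro ⟨y, hy⟩
    exact hirr ⟨y, by rw [← hy]; exact (eq_ratCast _ y).symm⟩
  constructor
  · intro hrec
    exact auxC α hα0 halg hdeg hrec
  · intro hne
    exact auxB α hα0 hint hdeg (auxD α hα0 halg hne)
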